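/- The H-Baer radical of an H-module algebra R equals the intersection of all H-prime ideals of R: r_{Hb}(R) = ∩{ P : P is an H-ideal of R with R/P an H-prime module algebra }. -/

import Mathlib

open scoped TensorProduct

class HModAlg (k H R : Type*) [CommRing k] [Ring H] [Algebra k H]
    [Coalgebra k H] [NonUnitalRing R] [Module k R]
    [SMulCommClass k R R] [IsScalarTower k R R] where
  hsmul : H →ₗ[k] R →ₗ[k] R
  one_hsmul : ∀ r : R, hsmul 1 r = r
  mul_hsmul : ∀ (h h' : H) (r : R), hsmul (h * h') r = hsmul h (hsmul h' r)
  hsmul_mul : ∀ (h : H) (a b : R),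
    hsmul h (a * b) =
      LinearMap.mul' k R
        (TensorProduct.map (hsmul.flip a) (hsmul.flip b) (Coalgebra.comul h))

/-- product f 0 * f 1 * ⋯ * f n -/
def prodSeq {R : Type*} [Mul R] (f : ℕ → R) : ℕ → R
  | 0 => f 0
  | n + 1 => prodSeq f n * f (n + 1)

/-- `I` is a nilpotent subset: some power of it vanishes. -/
def IsNilpotentSet {R : Type*} [Mul R] [Zero R] (I : Set R) : Prop :=
  ∃ n : ℕ, ∀ f : ℕ → R, (∀ i, f i ∈ I) → prodSeq f n = 0

/-- `I` is nilpotent modulo `J`. -/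
def IsNilpotentSetMod {R : Type*} [Mul R] (I J : Set R) : Prop :=
  ∃ n : ℕ, ∀ f : ℕ → R, (∀ i, f i ∈ I) → prodSeq f n ∈ J

section Defs

variable (k H : Type*) {R : Type*} [CommRing k] [Ring H] [Algebra k H]
  [Coalgebra k H] [NonUnitalRing R] [Module k R]
  [SMulCommClass k R R] [IsScalarTower k R R] [HModAlg k H R]

/-- The action of `h : H` on `r : R`. -/
def hact (h : H) (r : R) : R := HModAlg.hsmul (k := k) h r

/-- `I` is an `H`-ideal of the `H`-module (sub)algebra `B ⊆ R`. -/
structure IsHIdealIn (B I : Set R) : Prop where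
  subset : I ⊆ B
  zero_mem : (0 : R) ∈ I
  add_mem : ∀ {x y : R}, x ∈ I → y ∈ I → x + y ∈ I
  neg_mem : ∀ {x : R}, x ∈ I → -x ∈ I
  mul_mem_left : ∀ {x : R}, x ∈ B → ∀ {y : R}, y ∈ I → x * y ∈ I
  mul_mem_right : ∀ {x : R}, x ∈ I → ∀ {y : R}, y ∈ B → x * y ∈ I
  hsmul_mem : ∀ (h : H) {x : R}, x ∈ I → hact k H h x ∈ I

/-- `I` is an `H`-ideal of `R`. -/
def IsHIdeal (I : Set R) : Prop := IsHIdealIn k H Set.univ I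

/-- `R` is `H`-semiprime. -/
def IsHSemiprime : Prop :=
  ∀ I : Set R, IsHIdeal k H I → IsNilpotentSet I → I = {0}

/-- The subalgebra `B` of `R` is `H`-semiprime. -/
def IsHSemiprimeIn (B : Set R) : Prop :=
  ∀ I : Set R, IsHIdealIn k H B I → IsNilpotentSet I → I = {0}

/-- `R` is `H`-prime. -/
def IsHPrime : Prop :=
  ∀ I J : Set R, IsHIdeal k H I → IsHIdeal k H J →
    (∀ a ∈ I, ∀ b ∈ J, a * b = 0) → I = {0} ∨ J = {0}

/-- The `H`-ideal of `R` generated by `E`. -/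
def genHIdeal (E : Set R) : Set R := ⋂₀ {I : Set R | IsHIdeal k H I ∧ E ⊆ I}

end Defs


section Radical

variable (k H : Type*) {R : Type*} [CommRing k] [Ring H] [Algebra k H]
  [Coalgebra k H] [NonUnitalRing R] [Module k R]
  [SMulCommClass k R R] [IsScalarTower k R R] [HModAlg k H R]

/-- The `H`-ideal `I` is a radical (`r_{Hb}`-) `H`-ideal: every non-zero
`H`-homomorphic image of `I` (equivalently, every quotient `I/J` of `I` by a proper
`H`-ideal `J` of `I`) contains a non-zero nilpotent `H`-ideal `K/J`. -/
def IsRadicalHIdeal (I : Set R) : Prop :=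
  IsHIdeal k H I ∧
    ∀ J : Set R, IsHIdealIn k H I J → J ≠ I →
      ∃ K : Set R, IsHIdealIn k H I K ∧ J ⊆ K ∧ J ≠ K ∧ IsNilpotentSetMod K J

/-- `B` is the `H`-Baer radical of `R`: the largest radical `H`-ideal of `R`. -/
def IsHBaerRadical (B : Set R) : Prop :=
  IsRadicalHIdeal k H B ∧ ∀ I : Set R, IsRadicalHIdeal k H I → I ⊆ B

end Radical

/-- `P` is an `H`-prime ideal of `R` (i.e. `R/P` is an `H`-prime module algebra). -/
def IsHPrimeIdeal (k H : Type*) {R : Type*} [CommRing k] [Ring H] [Algebra k H]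
    [Coalgebra k H] [NonUnitalRing R] [Module k R] [SMulCommClass k R R]
    [IsScalarTower k R R] [HModAlg k H R] (P : Set R) : Prop :=
  IsHIdeal k H P ∧
    ∀ I J : Set R, IsHIdeal k H I → IsHIdeal k H J →
      (∀ a ∈ I, ∀ b ∈ J, a * b ∈ P) → I ⊆ P ∨ J ⊆ P


section Helpers

variable (k H : Type*) {R : Type*} [CommRing k] [Ring H] [Algebra k H]
  [Coalgebra k H] [NonUnitalRing R] [Module k R]
  [SMulCommClass k R R] [IsScalarTower k R R] [HModAlg k H R]

lemma hact_eq (h : H) :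
    hact k H (R := R) h = ⇑(HModAlg.hsmul (k := k) (H := H) (R := R) h) := rfl

lemma hact_add (h : H) (x y : R) :
    hact k H h (x + y) = hact k H h x + hact k H h y := by
  rw [hact_eq]; exact map_add _ x y

lemma hact_neg (h : H) (x : R) : hact k H h (-x) = -(hact k H h x) := by
  rw [hact_eq]; exact map_neg _ x

lemma hact_zero (h : H) : hact k H h (0 : R) = 0 := by
  rw [hact_eq]; exact map_zero _

lemma hact_mul_mem (M : AddSubgroup R) (h : H) (a b : R)
    (hab : ∀ h₁ h₂ : H, hact k H h₁ a * hact k H h₂ b ∈ M) :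
    hact k H h (a * b) ∈ M := by
  have e : hact k H h (a * b)
      = LinearMap.mul' k R (TensorProduct.map
          ((HModAlg.hsmul (k := k) (H := H) (R := R)).flip a)
          ((HModAlg.hsmul (k := k) (H := H) (R := R)).flip b)
          (Coalgebra.comul h)) := HModAlg.hsmul_mul h a b
  rw [e]
  induction Coalgebra.comul (R := k) h using TensorProduct.induction_on with
  | zero => simpa using M.zero_mem
  | tmul x y =>
    rw [TensorProduct.map_tmul, LinearMap.mul'_apply]
    simp only [LinearMap.flip_apply]
    exact hab x y
  | add x y hx hy =>
    rw [map_add, map_add]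
    exact M.add_mem hx hy

lemma IsHIdeal.toIn {I : Set R} (h : IsHIdeal k H I) :
    IsHIdealIn k H Set.univ I := h

lemma mem_of_closure_subset {Bs P : Set R} (hP : IsHIdealIn k H Bs P) {A : Set R}
    (hA : A ⊆ P) {x : R} (hx : x ∈ AddSubgroup.closure A) : x ∈ P := by
  refine AddSubgroup.closure_induction (p := fun y _ => y ∈ P) (fun y hy => hA hy)
    hP.zero_mem (fun a b _ _ ha hb => hP.add_mem ha hb)
    (fun a _ ha => hP.neg_mem ha) hx

lemma mem_closure_mul {A B C : Set R} (hC : ∀ a ∈ A, ∀ b ∈ B, a * b ∈ C) {x y : R}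
    (hx : x ∈ AddSubgroup.closure A) (hy : y ∈ AddSubgroup.closure B) :
    x * y ∈ AddSubgroup.closure C := by
  refine AddSubgroup.closure_induction
    (p := fun x _ => x * y ∈ AddSubgroup.closure C) ?_ ?_ ?_ ?_ hx
  · intro a ha
    refine AddSubgroup.closure_induction
      (p := fun y _ => a * y ∈ AddSubgroup.closure C) ?_ ?_ ?_ ?_ hy
    · intro b hb; exact AddSubgroup.subset_closure (hC a ha b hb)
    · rw [mul_zero]; exact zero_mem _
    · intro u v _ _ hu hv; rw [mul_add]; exact add_mem hu hv
    · intro u _ hu; rw [mul_neg]; exact neg_mem hu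
  · rw [zero_mul]; exact zero_mem _
  · intro u v _ _ hu hv; rw [add_mul]; exact add_mem hu hv
  · intro u _ hu; rw [neg_mul]; exact neg_mem hu

lemma prodSeq_succ' (f : ℕ → R) (n : ℕ) :
    prodSeq f (n + 1) = prodSeq f n * f (n + 1) := rfl

lemma prodSeq_congr' {f g : ℕ → R} :
    ∀ {n : ℕ}, (∀ i ≤ n, f i = g i) → prodSeq f n = prodSeq g n := by
  intro n
  induction n with
  | zero => intro h; exact h 0 (le_refl 0)
  | succ n ih =>
    intro h
    rw [prodSeq_succ', prodSeq_succ', ih (fun i hi => h i (Nat.le_succ_of_le hi)),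
      h (n+1) (le_refl _)]

lemma prodSeq_update' (f : ℕ → R) (m : ℕ) :
    prodSeq (Function.update f m (f m * f (m+1))) m = prodSeq f (m + 1) := by
  cases m with
  | zero => simp [prodSeq, Function.update_self]
  | succ m =>
    rw [prodSeq_succ', prodSeq_succ', prodSeq_succ']
    rw [prodSeq_congr' (g := f) (fun i hi => Function.update_of_ne (by omega) _ f),
      Function.update_self, ← mul_assoc]

lemma prodSeq_mem_of_ge {P L : Set R} (hmul : ∀ x ∈ L, ∀ y ∈ L, x * y ∈ L)
    (n : ℕ) (hn : ∀ f : ℕ → R, (∀ i, f i ∈ L) → prodSeq f n ∈ P) :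
    ∀ m, n ≤ m → ∀ f : ℕ → R, (∀ i, f i ∈ L) → prodSeq f m ∈ P := by
  intro m
  induction m with
  | zero =>
    intro h f hf
    obtain rfl : n = 0 := Nat.le_zero.mp h
    exact hn f hf
  | succ m ih =>
    intro h f hf
    rcases Nat.lt_or_ge m n with hmn | hmn
    · obtain rfl : n = m + 1 := by omega
      exact hn f hf
    · rw [← prodSeq_update' f m]
      apply ih hmn
      intro i
      rcases eq_or_ne i m with rfl | hne
      · rw [Function.update_self]; exact hmul _ (hf i) _ (hf (i+1))
      · rw [Function.update_of_ne hne]; exact hf i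

lemma prodSeq_group3 (f : ℕ → R) :
    ∀ n, prodSeq (fun i => f (3*i) * f (3*i+1) * f (3*i+2)) n = prodSeq f (3*n+2) := by
  intro n
  induction n with
  | zero => norm_num [prodSeq]
  | succ n ih =>
    rw [prodSeq_succ', ih]
    show prodSeq f (3*n+2) * (f (3*(n+1)) * f (3*(n+1)+1) * f (3*(n+1)+2))
        = prodSeq f (3*(n+1)+2)
    have e3 : 3*(n+1)+2 = 3*n+2+1+1+1 := by ring
    have e2 : 3*(n+1)+1 = 3*n+2+1+1 := by ring
    have e1 : 3*(n+1) = 3*n+2+1 := by ring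
    rw [e3, e2, e1, prodSeq_succ' f (3*n+2+1+1), prodSeq_succ' f (3*n+2+1),
      prodSeq_succ' f (3*n+2)]
    simp [mul_assoc]

end Helpers


section Infra

variable (k H : Type*) {R : Type*} [CommRing k] [Ring H] [Algebra k H]
  [Coalgebra k H] [NonUnitalRing R] [Module k R]
  [SMulCommClass k R R] [IsScalarTower k R R] [HModAlg k H R]

/-- The `H`-ideal of `Bs` generated by `E`. -/
def genIn (Bs E : Set R) : Set R := ⋂₀ {I : Set R | IsHIdealIn k H Bs I ∧ E ⊆ I}

lemma genIn_isHIdealIn {Bs E : Set R} (hBs : IsHIdealIn k H Bs Bs) (hE : E ⊆ Bs) :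
    IsHIdealIn k H Bs (genIn k H Bs E) := by
  constructor
  · exact Set.sInter_subset_of_mem ⟨hBs, hE⟩
  · exact Set.mem_sInter.mpr fun I hI => hI.1.zero_mem
  · intro x y hx hy
    exact Set.mem_sInter.mpr fun I hI =>
      hI.1.add_mem (Set.mem_sInter.mp hx I hI) (Set.mem_sInter.mp hy I hI)
  · intro x hx
    exact Set.mem_sInter.mpr fun I hI => hI.1.neg_mem (Set.mem_sInter.mp hx I hI)
  · intro x hx y hy
    exact Set.mem_sInter.mpr fun I hI => hI.1.mul_mem_left hx (Set.mem_sInter.mp hy I hI)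
  · intro x hx y hy
    exact Set.mem_sInter.mpr fun I hI => hI.1.mul_mem_right (Set.mem_sInter.mp hx I hI) hy
  · intro h x hx
    exact Set.mem_sInter.mpr fun I hI => hI.1.hsmul_mem h (Set.mem_sInter.mp hx I hI)

lemma subset_genIn (Bs E : Set R) : E ⊆ genIn k H Bs E :=
  fun x hx => Set.mem_sInter.mpr fun _ hI => hI.2 hx

lemma genIn_subset {Bs E I : Set R} (hI : IsHIdealIn k H Bs I) (hE : E ⊆ I) :
    genIn k H Bs E ⊆ I := Set.sInter_subset_of_mem ⟨hI, hE⟩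

lemma inter_isHIdealIn {Bs T : Set R} (hB : IsHIdeal k H Bs) (hT : IsHIdeal k H T) :
    IsHIdealIn k H Bs (T ∩ Bs) := by
  constructor
  · exact Set.inter_subset_right
  · exact ⟨(IsHIdeal.toIn k H hT).zero_mem, (IsHIdeal.toIn k H hB).zero_mem⟩
  · intro x y hx hy
    exact ⟨(IsHIdeal.toIn k H hT).add_mem hx.1 hy.1, (IsHIdeal.toIn k H hB).add_mem hx.2 hy.2⟩
  · intro x hx
    exact ⟨(IsHIdeal.toIn k H hT).neg_mem hx.1, (IsHIdeal.toIn k H hB).neg_mem hx.2⟩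
  · intro x hx y hy
    exact ⟨(IsHIdeal.toIn k H hT).mul_mem_left (Set.mem_univ x) hy.1,
      (IsHIdeal.toIn k H hB).mul_mem_left (Set.mem_univ x) hy.2⟩
  · intro x hx y hy
    exact ⟨(IsHIdeal.toIn k H hT).mul_mem_right hx.1 (Set.mem_univ y),
      (IsHIdeal.toIn k H hB).mul_mem_right hx.2 (Set.mem_univ y)⟩
  · intro h x hx
    exact ⟨(IsHIdeal.toIn k H hT).hsmul_mem h hx.1, (IsHIdeal.toIn k H hB).hsmul_mem h hx.2⟩

lemma sum_isHIdealIn {Bs G J : Set R} (hadd : ∀ {x y : R}, x ∈ Bs → y ∈ Bs → x + y ∈ Bs)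
    (hG : IsHIdealIn k H Bs G) (hJ : IsHIdealIn k H Bs J) :
    IsHIdealIn k H Bs {z : R | ∃ a ∈ G, ∃ p ∈ J, z = a + p} := by
  constructor
  · rintro z ⟨a, ha, p, hp, rfl⟩; exact hadd (hG.subset ha) (hJ.subset hp)
  · exact ⟨0, hG.zero_mem, 0, hJ.zero_mem, (add_zero 0).symm⟩
  · rintro x y ⟨a, ha, p, hp, rfl⟩ ⟨a', ha', p', hp', rfl⟩
    exact ⟨a + a', hG.add_mem ha ha', p + p', hJ.add_mem hp hp', by abel⟩
  · rintro x ⟨a, ha, p, hp, rfl⟩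
    exact ⟨-a, hG.neg_mem ha, -p, hJ.neg_mem hp, by abel⟩
  · rintro x hx y ⟨a, ha, p, hp, rfl⟩
    exact ⟨x * a, hG.mul_mem_left hx ha, x * p, hJ.mul_mem_left hx hp, mul_add x a p⟩
  · rintro x ⟨a, ha, p, hp, rfl⟩ y hy
    exact ⟨a * y, hG.mul_mem_right ha hy, p * y, hJ.mul_mem_right hp hy, add_mul a p y⟩
  · rintro h x ⟨a, ha, p, hp, rfl⟩
    exact ⟨hact k H h a, hG.hsmul_mem h ha, hact k H h p, hJ.hsmul_mem h hp,
      hact_add k H h a p⟩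

lemma mulClosure_isHIdeal {L L' : Set R} (hL : IsHIdeal k H L) (hL' : IsHIdeal k H L') :
    IsHIdeal k H (AddSubgroup.closure {z : R | ∃ a ∈ L, ∃ b ∈ L', z = a * b} : Set R) := by
  set G : Set R := {z : R | ∃ a ∈ L, ∃ b ∈ L', z = a * b} with hG
  constructor
  · exact Set.subset_univ _
  · exact (AddSubgroup.closure G).zero_mem
  · intro x y hx hy; exact add_mem hx hy
  · intro x hx; exact neg_mem hx
  · intro x _ y hy
    refine AddSubgroup.closure_induction
      (p := fun z _ => x * z ∈ AddSubgroup.closure G) ?_ ?_ ?_ ?_ hy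
    · rintro z ⟨a, ha, b, hb, rfl⟩
      rw [← mul_assoc]
      exact AddSubgroup.subset_closure
        ⟨x * a, (IsHIdeal.toIn k H hL).mul_mem_left (Set.mem_univ x) ha, b, hb, rfl⟩
    · rw [mul_zero]; exact zero_mem _
    · intro u v _ _ hu hv; rw [mul_add]; exact add_mem hu hv
    · intro u _ hu; rw [mul_neg]; exact neg_mem hu
  · intro x hx y _
    refine AddSubgroup.closure_induction
      (p := fun z _ => z * y ∈ AddSubgroup.closure G) ?_ ?_ ?_ ?_ hx
    · rintro z ⟨a, ha, b, hb, rfl⟩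
      rw [mul_assoc]
      exact AddSubgroup.subset_closure
        ⟨a, ha, b * y, (IsHIdeal.toIn k H hL').mul_mem_right hb (Set.mem_univ y), rfl⟩
    · rw [zero_mul]; exact zero_mem _
    · intro u v _ _ hu hv; rw [add_mul]; exact add_mem hu hv
    · intro u _ hu; rw [neg_mul]; exact neg_mem hu
  · intro h x hx
    refine AddSubgroup.closure_induction
      (p := fun z _ => hact k H h z ∈ AddSubgroup.closure G) ?_ ?_ ?_ ?_ hx
    · rintro z ⟨a, ha, b, hb, rfl⟩
      exact hact_mul_mem k H _ h a b (fun h₁ h₂ => AddSubgroup.subset_closure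
        ⟨hact k H h₁ a, (IsHIdeal.toIn k H hL).hsmul_mem h₁ ha,
         hact k H h₂ b, (IsHIdeal.toIn k H hL').hsmul_mem h₂ hb, rfl⟩)
    · rw [hact_zero]; exact zero_mem _
    · intro u v _ _ hu hv; rw [hact_add]; exact add_mem hu hv
    · intro u _ hu; rw [hact_neg]; exact neg_mem hu

lemma prime_of_nilpotent {P : Set R} (hP : IsHPrimeIdeal k H P) :
    ∀ (n : ℕ) (L : Set R), IsHIdeal k H L →
      (∀ f : ℕ → R, (∀ i, f i ∈ L) → prodSeq f n ∈ P) → L ⊆ P := by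
  intro n
  induction n with
  | zero =>
    intro L hL hf x hx
    simpa [prodSeq] using hf (fun _ => x) (fun _ => hx)
  | succ n ih =>
    intro L hL hf
    set G : Set R := {z : R | ∃ a ∈ L, ∃ b ∈ L, z = a * b} with hGdef
    have hL₂ : IsHIdeal k H (AddSubgroup.closure G : Set R) :=
      mulClosure_isHIdeal k H hL hL
    have claim : ∀ (m : ℕ) (f : ℕ → R), (∀ i, f i ∈ AddSubgroup.closure G) →
        prodSeq f m ∈ AddSubgroup.closure
          {z : R | ∃ g : ℕ → R, (∀ i, g i ∈ L) ∧ z = prodSeq g (2*m+1)} := by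
      intro m
      induction m with
      | zero =>
        intro f hf'
        have h0 : prodSeq f 0 = f 0 := rfl
        rw [h0]
        refine AddSubgroup.closure_mono ?_ (hf' 0)
        rintro z ⟨a, ha, b, hb, rfl⟩
        refine ⟨fun i => if i = 0 then a else b, fun i => ?_, by simp [prodSeq]⟩
        dsimp only; split
        · exact ha
        · exact hb
      | succ m ihm =>
        intro f hf'
        rw [prodSeq_succ']
        refine mem_closure_mul ?_ (ihm f hf') (hf' (m+1))
        rintro z ⟨g, hg, rfl⟩ w ⟨a, ha, b, hb, rfl⟩
        refine ⟨fun i => if i ≤ 2*m+1 then g i else if i = 2*m+2 then a else b,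
          fun i => ?_, ?_⟩
        · dsimp only; split
          · exact hg i
          · split
            · exact ha
            · exact hb
        · have e : 2*(m+1)+1 = 2*m+1+1+1 := by ring
          rw [e, prodSeq_succ' _ (2*m+1+1), prodSeq_succ' _ (2*m+1)]
          have c1 : prodSeq (fun i => if i ≤ 2*m+1 then g i else if i = 2*m+2 then a else b)
              (2*m+1) = prodSeq g (2*m+1) :=
            prodSeq_congr' (fun i hi => by simp [if_pos hi])
          have hA : ¬(2*m+1+1 ≤ 2*m+1) := by omega
          have hB : 2*m+1+1 = 2*m+2 := by omega
          have hC : ¬(2*m+1+1+1 ≤ 2*m+1) := by omega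
          have hD : ¬(2*m+1+1+1 = 2*m+2) := by omega
          rw [c1, if_neg hA, if_pos hB, if_neg hC, if_neg hD, mul_assoc]
    have hD : {z : R | ∃ g : ℕ → R, (∀ i, g i ∈ L) ∧ z = prodSeq g (2*n+1)} ⊆ P := by
      rintro z ⟨g, hg, rfl⟩
      exact prodSeq_mem_of_ge
        (fun x hx y hy => (IsHIdeal.toIn k H hL).mul_mem_right hx (Set.mem_univ y))
        (n+1) hf (2*n+1) (by omega) g hg
    have hnil₂ : ∀ f : ℕ → R, (∀ i, f i ∈ (AddSubgroup.closure G : Set R)) →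
        prodSeq f n ∈ P := by
      intro f hf'
      exact mem_of_closure_subset k H (IsHIdeal.toIn k H hP.1) hD (claim n f hf')
    have hsub := ih (AddSubgroup.closure G : Set R) hL₂ hnil₂
    rcases hP.2 L L hL hL
      (fun a ha b hb => hsub (AddSubgroup.subset_closure ⟨a, ha, b, hb, rfl⟩)) with h | h
    · exact h
    · exact h

end Infra


section DirA

variable (k H : Type*) {R : Type*} [CommRing k] [Ring H] [Algebra k H]
  [Coalgebra k H] [NonUnitalRing R] [Module k R]
  [SMulCommClass k R R] [IsScalarTower k R R] [HModAlg k H R]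

lemma baer_subset_prime {B P : Set R} (hB : IsHBaerRadical k H B)
    (hP : IsHPrimeIdeal k H P) : B ⊆ P := by
  by_contra hBP
  have hBideal : IsHIdeal k H B := hB.1.1
  have hJ : IsHIdealIn k H B (P ∩ B) := inter_isHIdealIn k H hBideal hP.1
  have hJne : P ∩ B ≠ B := by
    intro h
    apply hBP
    intro x hx
    rw [← h] at hx
    exact hx.1
  obtain ⟨K, hK, hJK, hJKne, n, hn⟩ := hB.1.2 _ hJ hJne
  set S : Set R := {z : R | z ∈ K ∨ (∃ r x, x ∈ K ∧ z = r * x) ∨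
    (∃ x r, x ∈ K ∧ z = x * r) ∨ (∃ r x r', x ∈ K ∧ z = r * x * r')} with hSdef
  have hKB : K ⊆ B := hK.subset
  have hSB : S ⊆ B := by
    rintro z (hz | ⟨r, x, hx, rfl⟩ | ⟨x, r, hx, rfl⟩ | ⟨r, x, r', hx, rfl⟩)
    · exact hKB hz
    · exact (IsHIdeal.toIn k H hBideal).mul_mem_left (Set.mem_univ r) (hKB hx)
    · exact (IsHIdeal.toIn k H hBideal).mul_mem_right (hKB hx) (Set.mem_univ r)
    · exact (IsHIdeal.toIn k H hBideal).mul_mem_right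
        ((IsHIdeal.toIn k H hBideal).mul_mem_left (Set.mem_univ r) (hKB hx))
        (Set.mem_univ r')
  have hLB : (AddSubgroup.closure S : Set R) ⊆ B :=
    fun x hx => mem_of_closure_subset k H (IsHIdeal.toIn k H hBideal) hSB hx
  -- the generated ideal is an H-ideal
  set S₂ : Set R := {t : R | ∃ r y, y ∈ K ∧ t = r * y} with hS₂def
  have hS₂S : S₂ ⊆ S := by
    rintro t ⟨r, y, hy, rfl⟩
    exact Or.inr (Or.inl ⟨r, y, hy, rfl⟩)
  have hactS₂ : ∀ (h : H) (r x : R), x ∈ K →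
      hact k H h (r * x) ∈ AddSubgroup.closure S₂ := by
    intro h r x hx
    refine hact_mul_mem k H _ h r x ?_
    intro h₁ h₂
    exact AddSubgroup.subset_closure ⟨hact k H h₁ r, hact k H h₂ x, hK.hsmul_mem h₂ hx, rfl⟩
  have hmulright : ∀ (w z : R), z ∈ AddSubgroup.closure S₂ →
      z * w ∈ AddSubgroup.closure S := by
    intro w z hz
    refine AddSubgroup.closure_induction
      (p := fun z _ => z * w ∈ AddSubgroup.closure S) ?_ ?_ ?_ ?_ hz
    · rintro t ⟨r', y, hy, rfl⟩
      exact AddSubgroup.subset_closure (Or.inr (Or.inr (Or.inr ⟨r', y, w, hy, rfl⟩)))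
    · rw [zero_mul]; exact zero_mem _
    · intro u v _ _ hu hv; rw [add_mul]; exact add_mem hu hv
    · intro u _ hu; rw [neg_mul]; exact neg_mem hu
  have hLideal : IsHIdeal k H (AddSubgroup.closure S : Set R) := by
    constructor
    · exact Set.subset_univ _
    · exact (AddSubgroup.closure S).zero_mem
    · intro x y hx hy; exact add_mem hx hy
    · intro x hx; exact neg_mem hx
    · intro x _ y hy
      refine AddSubgroup.closure_induction
        (p := fun z _ => x * z ∈ AddSubgroup.closure S) ?_ ?_ ?_ ?_ hy
      · rintro z (hz | ⟨r, u, hu, rfl⟩ | ⟨u, r, hu, rfl⟩ | ⟨r, u, r', hu, rfl⟩)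
        · exact AddSubgroup.subset_closure (Or.inr (Or.inl ⟨x, z, hz, rfl⟩))
        · rw [← mul_assoc]
          exact AddSubgroup.subset_closure (Or.inr (Or.inl ⟨x * r, u, hu, rfl⟩))
        · rw [← mul_assoc]
          exact AddSubgroup.subset_closure (Or.inr (Or.inr (Or.inr ⟨x, u, r, hu, rfl⟩)))
        · have e : x * (r * u * r') = (x * r) * u * r' := by
            simp only [mul_assoc]
          rw [e]
          exact AddSubgroup.subset_closure (Or.inr (Or.inr (Or.inr ⟨x * r, u, r', hu, rfl⟩)))
      · rw [mul_zero]; exact zero_mem _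
      · intro u v _ _ hu hv; rw [mul_add]; exact add_mem hu hv
      · intro u _ hu; rw [mul_neg]; exact neg_mem hu
    · intro x hx y _
      refine AddSubgroup.closure_induction
        (p := fun z _ => z * y ∈ AddSubgroup.closure S) ?_ ?_ ?_ ?_ hx
      · rintro z (hz | ⟨r, u, hu, rfl⟩ | ⟨u, r, hu, rfl⟩ | ⟨r, u, r', hu, rfl⟩)
        · exact AddSubgroup.subset_closure (Or.inr (Or.inr (Or.inl ⟨z, y, hz, rfl⟩)))
        · exact AddSubgroup.subset_closure (Or.inr (Or.inr (Or.inr ⟨r, u, y, hu, rfl⟩)))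
        · rw [mul_assoc]
          exact AddSubgroup.subset_closure (Or.inr (Or.inr (Or.inl ⟨u, r * y, hu, rfl⟩)))
        · rw [mul_assoc]
          exact AddSubgroup.subset_closure
            (Or.inr (Or.inr (Or.inr ⟨r, u, r' * y, hu, rfl⟩)))
      · rw [zero_mul]; exact zero_mem _
      · intro u v _ _ hu hv; rw [add_mul]; exact add_mem hu hv
      · intro u _ hu; rw [neg_mul]; exact neg_mem hu
    · intro h x hx
      refine AddSubgroup.closure_induction
        (p := fun z _ => hact k H h z ∈ AddSubgroup.closure S) ?_ ?_ ?_ ?_ hx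
      · rintro z (hz | ⟨r, u, hu, rfl⟩ | ⟨u, r, hu, rfl⟩ | ⟨r, u, r', hu, rfl⟩)
        · exact AddSubgroup.subset_closure (Or.inl (hK.hsmul_mem h hz))
        · exact AddSubgroup.closure_mono hS₂S (hactS₂ h r u hu)
        · refine hact_mul_mem k H _ h u r ?_
          intro h₁ h₂
          exact AddSubgroup.subset_closure
            (Or.inr (Or.inr (Or.inl ⟨hact k H h₁ u, hact k H h₂ r, hK.hsmul_mem h₁ hu, rfl⟩)))
        · refine hact_mul_mem k H _ h (r * u) r' ?_
          intro h₁ h₂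
          exact hmulright (hact k H h₂ r') _ (hactS₂ h₁ r u hu)
      · rw [hact_zero]; exact zero_mem _
      · intro u v _ _ hu hv; rw [hact_add]; exact add_mem hu hv
      · intro u _ hu; rw [hact_neg]; exact neg_mem hu
  -- triple products land in K
  have htriple : ∀ a ∈ B, ∀ c ∈ B, ∀ z ∈ AddSubgroup.closure S, a * z * c ∈ K := by
    intro a ha c hc z hz
    refine AddSubgroup.closure_induction
      (p := fun z _ => a * z * c ∈ K) ?_ ?_ ?_ ?_ hz
    · rintro z (hz' | ⟨r, u, hu, rfl⟩ | ⟨u, r, hu, rfl⟩ | ⟨r, u, r', hu, rfl⟩)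
      · exact hK.mul_mem_right (hK.mul_mem_left ha hz') hc
      · have e : a * (r * u) * c = (a * r) * u * c := by simp only [mul_assoc]
        rw [e]
        exact hK.mul_mem_right
          (hK.mul_mem_left ((IsHIdeal.toIn k H hBideal).mul_mem_right ha (Set.mem_univ r)) hu) hc
      · have e : a * (u * r) * c = (a * u) * (r * c) := by simp only [mul_assoc]
        rw [e]
        exact hK.mul_mem_right (hK.mul_mem_left ha hu)
          ((IsHIdeal.toIn k H hBideal).mul_mem_left (Set.mem_univ r) hc)
      · have e : a * (r * u * r') * c = ((a * r) * u) * (r' * c) := by simp only [mul_assoc]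
        rw [e]
        exact hK.mul_mem_right
          (hK.mul_mem_left ((IsHIdeal.toIn k H hBideal).mul_mem_right ha (Set.mem_univ r)) hu)
          ((IsHIdeal.toIn k H hBideal).mul_mem_left (Set.mem_univ r') hc)
    · rw [mul_zero, zero_mul]; exact hK.zero_mem
    · intro u v _ _ hu hv; rw [mul_add, add_mul]; exact hK.add_mem hu hv
    · intro u _ hu; rw [mul_neg, neg_mul]; exact hK.neg_mem hu
  -- nilpotency of the closure modulo P
  have hnil : ∀ f : ℕ → R, (∀ i, f i ∈ (AddSubgroup.closure S : Set R)) →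
      prodSeq f (3*n+2) ∈ P := by
    intro f hf
    have hg : ∀ i, f (3*i) * f (3*i+1) * f (3*i+2) ∈ K :=
      fun i => htriple _ (hLB (hf (3*i))) _ (hLB (hf (3*i+2))) _ (hf (3*i+1))
    have h1 := hn _ hg
    rw [prodSeq_group3 f n] at h1
    exact h1.1
  have hLP : (AddSubgroup.closure S : Set R) ⊆ P :=
    prime_of_nilpotent k H hP (3*n+2) _ hLideal hnil
  apply hJKne
  refine Set.Subset.antisymm hJK (fun x hx => ⟨hLP (AddSubgroup.subset_closure (Or.inl hx)), hKB hx⟩)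

end DirA


section DirB

variable (k H : Type*) {R : Type*} [CommRing k] [Ring H] [Algebra k H]
  [Coalgebra k H] [NonUnitalRing R] [Module k R]
  [SMulCommClass k R R] [IsScalarTower k R R] [HModAlg k H R]

lemma sInter_prime_radical :
    IsRadicalHIdeal k H (⋂₀ {P : Set R | IsHPrimeIdeal k H P}) := by
  set N : Set R := ⋂₀ {P : Set R | IsHPrimeIdeal k H P} with hNdef
  have hNideal : IsHIdeal k H N := by
    constructor
    · exact Set.subset_univ _
    · exact Set.mem_sInter.mpr fun P hP => (IsHIdeal.toIn k H hP.1).zero_mem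
    · intro x y hx hy
      exact Set.mem_sInter.mpr fun P hP => (IsHIdeal.toIn k H hP.1).add_mem
        (Set.mem_sInter.mp hx P hP) (Set.mem_sInter.mp hy P hP)
    · intro x hx
      exact Set.mem_sInter.mpr fun P hP =>
        (IsHIdeal.toIn k H hP.1).neg_mem (Set.mem_sInter.mp hx P hP)
    · intro x _ y hy
      exact Set.mem_sInter.mpr fun P hP =>
        (IsHIdeal.toIn k H hP.1).mul_mem_left (Set.mem_univ x) (Set.mem_sInter.mp hy P hP)
    · intro x hx y _
      exact Set.mem_sInter.mpr fun P hP =>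
        (IsHIdeal.toIn k H hP.1).mul_mem_right (Set.mem_sInter.mp hx P hP) (Set.mem_univ y)
    · intro h x hx
      exact Set.mem_sInter.mpr fun P hP =>
        (IsHIdeal.toIn k H hP.1).hsmul_mem h (Set.mem_sInter.mp hx P hP)
  have hNN : IsHIdealIn k H N N := by
    constructor
    · exact subset_refl _
    · exact (IsHIdeal.toIn k H hNideal).zero_mem
    · intro x y hx hy; exact (IsHIdeal.toIn k H hNideal).add_mem hx hy
    · intro x hx; exact (IsHIdeal.toIn k H hNideal).neg_mem hx
    · intro x _ y hy; exact (IsHIdeal.toIn k H hNideal).mul_mem_left (Set.mem_univ x) hy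
    · intro x hx y _; exact (IsHIdeal.toIn k H hNideal).mul_mem_right hx (Set.mem_univ y)
    · intro h x hx; exact (IsHIdeal.toIn k H hNideal).hsmul_mem h hx
  refine ⟨hNideal, ?_⟩
  intro J hJ hJN
  by_contra hnone
  push_neg at hnone
  -- key step: from a non-J element of N produce a product outside J
  have key : ∀ y : R, y ∈ N → y ∉ J →
      ∃ a b : R, a ∈ genIn k H N {y} ∧ b ∈ genIn k H N {y} ∧ a * b ∉ J := by
    intro y hyN hyJ
    have hyN' : ({y} : Set R) ⊆ N := by simpa using hyN
    have hG : IsHIdealIn k H N (genIn k H N {y}) := genIn_isHIdealIn k H hNN hyN'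
    by_contra hcon
    push_neg at hcon
    set Ksum : Set R := {z : R | ∃ a ∈ genIn k H N {y}, ∃ p ∈ J, z = a + p} with hKs
    have hKsum : IsHIdealIn k H N Ksum :=
      sum_isHIdealIn k H (fun hx hy => (IsHIdeal.toIn k H hNideal).add_mem hx hy) hG hJ
    have hJK : J ⊆ Ksum := fun p hp => ⟨0, hG.zero_mem, p, hp, (zero_add p).symm⟩
    have hne : J ≠ Ksum := by
      intro h
      have hy : y ∈ Ksum :=
        ⟨y, subset_genIn k H N {y} rfl, 0, hJ.zero_mem, (add_zero y).symm⟩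
      rw [← h] at hy
      exact hyJ hy
    refine hnone Ksum hKsum hJK hne ⟨1, ?_⟩
    intro f hf
    obtain ⟨a, ha, p, hp, h0⟩ := hf 0
    obtain ⟨a', ha', p', hp', h1⟩ := hf 1
    have hps : prodSeq f 1 = f 0 * f 1 := rfl
    rw [hps, h0, h1]
    have expand : (a + p) * (a' + p') = (a * a' + a * p') + (p * a' + p * p') := by
      rw [add_mul, mul_add, mul_add]
    rw [expand]
    refine hJ.add_mem (hJ.add_mem ?_ ?_) (hJ.add_mem ?_ ?_)
    · exact hcon a a' ha ha'
    · exact hJ.mul_mem_left (hG.subset ha) hp'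
    · exact hJ.mul_mem_right hp (hG.subset ha')
    · exact hJ.mul_mem_right hp (hJ.subset hp')
  -- pick a starting point
  obtain ⟨y₀, hy₀N, hy₀J⟩ : ∃ y, y ∈ N ∧ y ∉ J := by
    by_contra hc
    push_neg at hc
    exact hJN (Set.Subset.antisymm hJ.subset hc)
  -- build the sequence
  have keyT : ∀ y : {y : R // y ∈ N ∧ y ∉ J}, ∃ z : {y : R // y ∈ N ∧ y ∉ J},
      ∃ a b : R, a ∈ genIn k H N {y.1} ∧ b ∈ genIn k H N {y.1} ∧ z.1 = a * b := by
    rintro ⟨y, hyN, hyJ⟩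
    obtain ⟨a, b, ha, hb, hab⟩ := key y hyN hyJ
    have hyN' : ({y} : Set R) ⊆ N := by simpa using hyN
    have hG : IsHIdealIn k H N (genIn k H N {y}) := genIn_isHIdealIn k H hNN hyN'
    have habN : a * b ∈ N :=
      (IsHIdeal.toIn k H hNideal).mul_mem_right (hG.subset ha) (Set.mem_univ b)
    exact ⟨⟨a * b, habN, hab⟩, a, b, ha, hb, rfl⟩
  choose F Fa Fb hFa hFb hFe using keyT
  set xs : ℕ → {y : R // y ∈ N ∧ y ∉ J} := fun n => F^[n] ⟨y₀, hy₀N, hy₀J⟩ with hxsdef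
  have hxs_succ : ∀ n, xs (n + 1) = F (xs n) :=
    fun n => Function.iterate_succ_apply' F n _
  -- membership propagates along H-ideals of R
  have hmem_ideal : ∀ (T : Set R), IsHIdeal k H T → ∀ n, (xs n).1 ∈ T →
      ∀ m, (xs (n + m)).1 ∈ T := by
    intro T hT n hn m
    induction m with
    | zero => exact hn
    | succ m ihm =>
      have hsub : genIn k H N {(xs (n + m)).1} ⊆ T := by
        refine (genIn_subset k H (inter_isHIdealIn k H hNideal hT) ?_).trans
          Set.inter_subset_left
        simpa using ⟨ihm, (xs (n + m)).2.1⟩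
      have e : n + (m + 1) = (n + m) + 1 := rfl
      rw [e, hxs_succ, hFe (xs (n + m))]
      exact (IsHIdeal.toIn k H hT).mul_mem_right (hsub (hFa (xs (n + m)))) (Set.mem_univ _)
  set Sr : Set R := Set.range (fun n => (xs n).1) with hSrdef
  -- Zorn's lemma
  have hzorn : ∃ P : Set R, ({0} : Set R) ⊆ P ∧
      Maximal (fun Q => Q ∈ {Q : Set R | IsHIdeal k H Q ∧ Q ∩ Sr = ∅}) P := by
    apply zorn_subset_nonempty
    · intro c hc hchain hcne
      obtain ⟨Q₀, hQ₀⟩ := hcne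
      refine ⟨⋃₀ c, ⟨?_, ?_⟩, fun s hs => Set.subset_sUnion_of_mem hs⟩
      · constructor
        · exact Set.subset_univ _
        · exact ⟨Q₀, hQ₀, (IsHIdeal.toIn k H (hc hQ₀).1).zero_mem⟩
        · rintro x y ⟨Q₁, hQ₁, hx⟩ ⟨Q₂, hQ₂, hy⟩
          rcases hchain.total hQ₁ hQ₂ with h12 | h21
          · exact ⟨Q₂, hQ₂, (IsHIdeal.toIn k H (hc hQ₂).1).add_mem (h12 hx) hy⟩
          · exact ⟨Q₁, hQ₁, (IsHIdeal.toIn k H (hc hQ₁).1).add_mem hx (h21 hy)⟩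
        · rintro x ⟨Q₁, hQ₁, hx⟩
          exact ⟨Q₁, hQ₁, (IsHIdeal.toIn k H (hc hQ₁).1).neg_mem hx⟩
        · rintro x _ y ⟨Q₁, hQ₁, hy⟩
          exact ⟨Q₁, hQ₁, (IsHIdeal.toIn k H (hc hQ₁).1).mul_mem_left (Set.mem_univ x) hy⟩
        · rintro x ⟨Q₁, hQ₁, hx⟩ y _
          exact ⟨Q₁, hQ₁, (IsHIdeal.toIn k H (hc hQ₁).1).mul_mem_right hx (Set.mem_univ y)⟩
        · rintro h x ⟨Q₁, hQ₁, hx⟩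
          exact ⟨Q₁, hQ₁, (IsHIdeal.toIn k H (hc hQ₁).1).hsmul_mem h hx⟩
      · refine Set.eq_empty_iff_forall_notMem.mpr ?_
        rintro x ⟨⟨Q₁, hQ₁, hxQ⟩, hxS⟩
        exact Set.eq_empty_iff_forall_notMem.mp (hc hQ₁).2 x ⟨hxQ, hxS⟩
    · constructor
      · constructor
        · exact Set.subset_univ _
        · rfl
        · intro x y hx hy
          rw [Set.mem_singleton_iff] at *
          rw [hx, hy, add_zero]
        · intro x hx
          rw [Set.mem_singleton_iff] at *
          rw [hx, neg_zero]
        · intro x _ y hy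
          rw [Set.mem_singleton_iff] at *
          rw [hy, mul_zero]
        · intro x hx y _
          rw [Set.mem_singleton_iff] at *
          rw [hx, zero_mul]
        · intro h x hx
          rw [Set.mem_singleton_iff] at *
          rw [hx, hact_zero]
      · refine Set.eq_empty_iff_forall_notMem.mpr ?_
        rintro x ⟨hx0, n, hn⟩
        rw [Set.mem_singleton_iff] at hx0
        apply (xs n).2.2
        rw [show (xs n).1 = x from hn, hx0]
        exact hJ.zero_mem
  obtain ⟨P, -, hPmax⟩ := hzorn
  obtain ⟨⟨hPideal, hPS⟩, hPmax'⟩ := hPmax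
  -- the sum of an H-ideal with P
  have hsumIdeal : ∀ I₀ : Set R, IsHIdeal k H I₀ →
      IsHIdeal k H {z : R | ∃ a ∈ I₀, ∃ p ∈ P, z = a + p} :=
    fun I₀ hI₀ => sum_isHIdealIn k H (fun _ _ => Set.mem_univ _)
      (IsHIdeal.toIn k H hI₀) (IsHIdeal.toIn k H hPideal)
  have build : ∀ I₀ : Set R, IsHIdeal k H I₀ → ¬ I₀ ⊆ P →
      ∃ n, (xs n).1 ∈ {z : R | ∃ a ∈ I₀, ∃ p ∈ P, z = a + p} := by
    intro I₀ hI₀ hI₀P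
    have hQideal := hsumIdeal I₀ hI₀
    have hPQ : P ⊆ {z : R | ∃ a ∈ I₀, ∃ p ∈ P, z = a + p} :=
      fun p hp => ⟨0, (IsHIdeal.toIn k H hI₀).zero_mem, p, hp, (zero_add p).symm⟩
    have hQnP : ¬ {z : R | ∃ a ∈ I₀, ∃ p ∈ P, z = a + p} ⊆ P := by
      obtain ⟨i, hi, hiP⟩ := Set.not_subset.mp hI₀P
      exact fun h => hiP (h ⟨i, hi, 0, (IsHIdeal.toIn k H hPideal).zero_mem, (add_zero i).symm⟩)
    by_contra hc
    push_neg at hc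
    have hQS : {z : R | ∃ a ∈ I₀, ∃ p ∈ P, z = a + p} ∩ Sr = ∅ := by
      refine Set.eq_empty_iff_forall_notMem.mpr ?_
      rintro x ⟨hxQ, n, hn⟩
      exact hc n (by rw [show (xs n).1 = x from hn]; exact hxQ)
    exact hQnP (hPmax' ⟨hQideal, hQS⟩ hPQ)
  -- P is prime
  have hPprime : IsHPrimeIdeal k H P := by
    refine ⟨hPideal, ?_⟩
    intro I I' hI hI' hprod
    by_contra hcon
    push_neg at hcon
    obtain ⟨hInP, hI'nP⟩ := hcon
    obtain ⟨m, hm⟩ := build I hI hInP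
    obtain ⟨m', hm'⟩ := build I' hI' hI'nP
    set n := max m m' with hn
    have hxnQ : (xs n).1 ∈ {z : R | ∃ a ∈ I, ∃ p ∈ P, z = a + p} := by
      have h2 := hmem_ideal _ (hsumIdeal I hI) m hm (n - m)
      rwa [show m + (n - m) = n by omega] at h2
    have hxnQ' : (xs n).1 ∈ {z : R | ∃ a ∈ I', ∃ p ∈ P, z = a + p} := by
      have h2 := hmem_ideal _ (hsumIdeal I' hI') m' hm' (n - m')
      rwa [show m' + (n - m') = n by omega] at h2
    have hGsub : genIn k H N {(xs n).1} ⊆ {z : R | ∃ a ∈ I, ∃ p ∈ P, z = a + p} := by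
      refine (genIn_subset k H (inter_isHIdealIn k H hNideal (hsumIdeal I hI)) ?_).trans
        Set.inter_subset_left
      simpa using ⟨hxnQ, (xs n).2.1⟩
    have hGsub' : genIn k H N {(xs n).1} ⊆ {z : R | ∃ a ∈ I', ∃ p ∈ P, z = a + p} := by
      refine (genIn_subset k H (inter_isHIdealIn k H hNideal (hsumIdeal I' hI')) ?_).trans
        Set.inter_subset_left
      simpa using ⟨hxnQ', (xs n).2.1⟩
    obtain ⟨a1, ha1, p1, hp1, he1⟩ := hGsub (hFa (xs n))
    obtain ⟨a2, ha2, p2, hp2, he2⟩ := hGsub' (hFb (xs n))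
    have hmemP : (xs (n + 1)).1 ∈ P := by
      rw [hxs_succ, hFe (xs n), he1, he2]
      have expand : (a1 + p1) * (a2 + p2) = (a1 * a2 + a1 * p2) + (p1 * a2 + p1 * p2) := by
        rw [add_mul, mul_add, mul_add]
      rw [expand]
      refine (IsHIdeal.toIn k H hPideal).add_mem
        ((IsHIdeal.toIn k H hPideal).add_mem ?_ ?_)
        ((IsHIdeal.toIn k H hPideal).add_mem ?_ ?_)
      · exact hprod a1 ha1 a2 ha2
      · exact (IsHIdeal.toIn k H hPideal).mul_mem_left (Set.mem_univ a1) hp2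
      · exact (IsHIdeal.toIn k H hPideal).mul_mem_right hp1 (Set.mem_univ a2)
      · exact (IsHIdeal.toIn k H hPideal).mul_mem_right hp1 (Set.mem_univ p2)
    exact Set.eq_empty_iff_forall_notMem.mp hPS _ ⟨hmemP, ⟨n + 1, rfl⟩⟩
  -- final contradiction
  have hy₀P : y₀ ∈ P := Set.mem_sInter.mp hy₀N P hPprime
  exact Set.eq_empty_iff_forall_notMem.mp hPS y₀ ⟨hy₀P, ⟨0, rfl⟩⟩

end DirB

/-- the `H`-Baer radical equals the intersection of all
`H`-prime ideals of `R`. -/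
theorem stmt9 {k H R : Type*} [CommRing k] [Ring H] [Algebra k H] [Coalgebra k H]
    [NonUnitalRing R] [Module k R] [SMulCommClass k R R] [IsScalarTower k R R]
    [HModAlg k H R] (B : Set R) (hB : IsHBaerRadical k H B) :
    B = ⋂₀ {P : Set R | IsHPrimeIdeal k H P} := by
  refine Set.Subset.antisymm ?_ ?_
  · intro x hx
    exact Set.mem_sInter.mpr fun P hP => baer_subset_prime k H hB hP hx
  · exact hB.2 _ (sInter_prime_radical k H (R := R))
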